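/- Suppose G = G₁ × G₂ acts with cohomogeneity one on a closed topological manifold M with group diagram (G, H, K⁻, K⁺), and the projection of H to G₂ is all of G₂. Then the restricted action of G₁ × 1 on M is also of cohomogeneity one with the same orbits, with isotropy groups K^± ∩ (G₁ × 1) and H ∩ (G₁ × 1). -/

import Mathlib

/-!
STATEMENT 18: Suppose `G = G₁ × G₂` acts with cohomogeneity one on a closed topological
manifold `M` with group diagram `(G, H, K⁻, K⁺)`, and the projection of `H` to `G₂` is all of
`G₂`.  Then the restricted action of `G₁ × 1` on `M` is also of cohomogeneity one with the
same orbits, with isotropy groups `K^± ∩ (G₁ × 1)` and `H ∩ (G₁ × 1)`.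

We take `H` to be the stabilizer of a point `x₀` on a principal orbit (`hprincipal`: the
stabilizer of `x₀` is conjugate to a subgroup of every stabilizer), with
`Proj₂(H) = G₂` (`hproj`).  The conclusion says that every `G`-orbit is already a
`(G₁ × 1)`-orbit — so the subaction has the same orbits and hence is of cohomogeneity one —
and that the isotropy group of `x` in `G₁ × 1` is the intersection of the `G`-isotropy group
with `G₁ × 1`.
-/

theorem reducible_cohomogeneity_one_subaction
    {G₁ G₂ M : Type*} [Group G₁] [Group G₂]
    [TopologicalSpace G₁] [TopologicalSpace G₂] [IsTopologicalGroup G₁] [IsTopologicalGroup G₂]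
    [CompactSpace G₁] [CompactSpace G₂]
    (n : ℕ) [TopologicalSpace M] [T2Space M] [CompactSpace M]
    [ChartedSpace (EuclideanSpace ℝ (Fin n)) M]
    [MulAction (G₁ × G₂) M] [ContinuousSMul (G₁ × G₂) M]
    (x₀ : M)
    (hprincipal : ∀ y : M, ∃ g : G₁ × G₂,
      ∀ h ∈ MulAction.stabilizer (G₁ × G₂) x₀, g * h * g⁻¹ ∈ MulAction.stabilizer (G₁ × G₂) y)
    (hproj : Subgroup.map (MonoidHom.snd G₁ G₂) (MulAction.stabilizer (G₁ × G₂) x₀) = ⊤) :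
    ∀ x : M,
      (MulAction.orbit (G₁ × G₂) x = Set.range (fun g₁ : G₁ => ((g₁, (1 : G₂)) : G₁ × G₂) • x)) ∧
      ({g₁ : G₁ | ((g₁, (1 : G₂)) : G₁ × G₂) • x = x}
        = (MonoidHom.inl G₁ G₂) ⁻¹' (MulAction.stabilizer (G₁ × G₂) x : Set (G₁ × G₂))) := by
  -- every element of `G₂` is the second component of some element of `H`
  have hsurj : ∀ c : G₂, ∃ h ∈ MulAction.stabilizer (G₁ × G₂) x₀,
      (MonoidHom.snd G₁ G₂) h = c := by
    intro c
    have : c ∈ Subgroup.map (MonoidHom.snd G₁ G₂) (MulAction.stabilizer (G₁ × G₂) x₀) := by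
      rw [hproj]; trivial
    simpa using this
  intro x
  constructor
  · ext y
    constructor
    · rintro ⟨⟨a, b⟩, rfl⟩
      obtain ⟨g, hg⟩ := hprincipal x
      obtain ⟨h, hh, hh2⟩ := hsurj (g.2⁻¹ * b⁻¹ * g.2)
      have hmem : g * h * g⁻¹ ∈ MulAction.stabilizer (G₁ × G₂) x := hg h hh
      have hx : (g * h * g⁻¹) • x = x := hmem
      have hsnd : (g * h * g⁻¹).2 = b⁻¹ := by
        have : h.2 = g.2⁻¹ * b⁻¹ * g.2 := hh2
        simp only [Prod.snd_mul, Prod.snd_inv, this]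
        group
      refine ⟨a * (g * h * g⁻¹).1, ?_⟩
      have key : ((a, b) * (g * h * g⁻¹)) • x = (a, b) • x := by rw [mul_smul, hx]
      have heq : ((a * (g * h * g⁻¹).1, (1 : G₂)) : G₁ × G₂) = (a, b) * (g * h * g⁻¹) := by
        ext
        · simp
        · simp [hsnd]
      show ((a * (g * h * g⁻¹).1, (1 : G₂)) : G₁ × G₂) • x = ((a, b) : G₁ × G₂) • x
      rw [heq, key]
    · rintro ⟨g₁, rfl⟩
      exact ⟨((g₁, 1) : G₁ × G₂), rfl⟩
  · ext g₁
    simp [MulAction.mem_stabilizer_iff]
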